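/- Let f : ℝⁿ → ℝ ∪ {+∞} be proper lower semicontinuous and convex, with −∞ < α < β ≤ +∞. Suppose φ : [0, β−α) → [0,∞) is increasing, φ(0)=0, continuously differentiable on (0,β−α), and φ(f(x) − α) ≥ dist(x, {f ≤ α}) for all x with α < f(x) < β. If ∫₀^{β−α} φ(s)/s ds < +∞, then setting ψ(s) = ∫₀^s φ(t)/t dt, one has ψ'(f(x) − α) · dist(0, ∂f(x)) ≥ 1 for all x with α < f(x) < β. -/

import Mathlib

open Topology Filter MeasureTheory
open scoped ENNReal RealInnerProductSpace

-- Convexity for extended-real-valued functions.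
def ERealConvexOn {X : Type*} [NormedAddCommGroup X] [NormedSpace ℝ X]
    (f : X → EReal) : Prop :=
  ∀ x y : X, ∀ a b : ℝ, 0 ≤ a → 0 ≤ b → a + b = 1 →
    f (a • x + b • y) ≤ (a : EReal) * f x + (b : EReal) * f y

set_option maxHeartbeats 400000 in
theorem stmt9 {n : ℕ} (f : EuclideanSpace ℝ (Fin n) → EReal)
    (hlsc : LowerSemicontinuous f) (hconv : ERealConvexOn f)
    (hproper : ∃ x, f x ≠ ⊤) (hbot : ∀ x, f x ≠ ⊥)
    (α : ℝ) (β : EReal) (hαβ : (α : EReal) < β)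
    (φ : ℝ → ℝ) (hφ0 : φ 0 = 0)
    (hφmono : StrictMonoOn φ {s : ℝ | 0 ≤ s ∧ (s : EReal) < β - (α : EReal)})
    (hφC1 : ContDiffOn ℝ 1 φ {s : ℝ | 0 < s ∧ (s : EReal) < β - (α : EReal)})
    (hEB : ∀ x, (α : EReal) < f x → f x < β →
      EMetric.infEdist x {y | f y ≤ (α : EReal)} ≤
        ENNReal.ofReal (φ ((f x).toReal - α)))
    (hint : MeasureTheory.IntegrableOn (fun t => φ t / t)
      {t : ℝ | 0 < t ∧ (t : EReal) < β - (α : EReal)}) :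
    ∀ x, (α : EReal) < f x → f x < β →
      1 ≤ ENNReal.ofReal
            (deriv (fun s => ∫ t in Set.Ioc (0:ℝ) s, φ t / t) ((f x).toReal - α)) *
          ⨅ u ∈ {u : EuclideanSpace ℝ (Fin n) |
              ∀ y, f x + ((⟪u, y - x⟫ : ℝ) : EReal) ≤ f y}, (‖u‖₊ : ℝ≥0∞) := by
  intro x h1 h2
  set F : ℝ := (f x).toReal with hF
  have hfxt : f x ≠ ⊤ := h2.ne_top
  have hfx : f x = (F : EReal) := (EReal.coe_toReal hfxt (hbot x)).symm
  have hαF : α < F := by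
    rw [hfx] at h1; exact_mod_cast h1
  set r : ℝ := F - α with hrdef
  have hr0 : 0 < r := sub_pos.mpr hαF
  have hrβ : (r : EReal) < β - (α : EReal) := by
    have h2' : (F : EReal) < β := by rw [← hfx]; exact h2
    have := EReal.sub_lt_sub_of_lt_of_le h2' (le_refl (α : EReal))
      (by simp) (by simp)
    rw [hrdef, EReal.coe_sub]
    exact this
  set D : Set ℝ := {t : ℝ | 0 < t ∧ (t : EReal) < β - (α : EReal)} with hDdef
  have hrD : r ∈ D := ⟨hr0, hrβ⟩
  have hDopen : IsOpen D := by
    have hEq : D = Set.Ioi (0:ℝ) ∩ ((↑) : ℝ → EReal) ⁻¹' Set.Iio (β - (α : EReal)) := rfl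
    rw [hEq]
    exact isOpen_Ioi.inter (isOpen_Iio.preimage continuous_coe_real_ereal)
  have hDnhds : D ∈ 𝓝 r := hDopen.mem_nhds hrD
  -- positivity of φ r
  have h0mem : (0:ℝ) ∈ {s : ℝ | 0 ≤ s ∧ (s : EReal) < β - (α : EReal)} :=
    ⟨le_refl 0, lt_trans (by exact_mod_cast hr0) hrβ⟩
  have hrmem : r ∈ {s : ℝ | 0 ≤ s ∧ (s : EReal) < β - (α : EReal)} := ⟨hr0.le, hrβ⟩
  have hφr : 0 < φ r := by
    have := hφmono h0mem hrmem hr0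
    rwa [hφ0] at this
  -- Step A : derivative computation
  set g : ℝ → ℝ := fun t => φ t / t with hgdef
  have hgcont : ContinuousOn g D := by
    apply ContinuousOn.div
    · exact (hφC1.continuousOn)
    · exact continuousOn_id
    · exact fun t ht => ht.1.ne'
  have hsub : Set.Ioc (0:ℝ) r ⊆ D := by
    intro t ht
    exact ⟨ht.1, lt_of_le_of_lt (by exact_mod_cast ht.2) hrβ⟩
  have hInt : IntervalIntegrable g volume 0 r := by
    rw [intervalIntegrable_iff_integrableOn_Ioc_of_le hr0.le]
    exact hint.mono_set hsub
  have hmeasAt : StronglyMeasurableAtFilter g (𝓝 r) volume :=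
    ⟨D, hDnhds, hint.aestronglyMeasurable⟩
  have hder : HasDerivAt (fun s => ∫ t in (0:ℝ)..s, g t) (g r) r :=
    intervalIntegral.integral_hasDerivAt_right hInt hmeasAt (hgcont.continuousAt hDnhds)
  have heq : (fun s => ∫ t in Set.Ioc (0:ℝ) s, g t) =ᶠ[𝓝 r]
      (fun s => ∫ t in (0:ℝ)..s, g t) := by
    filter_upwards [Ioi_mem_nhds hr0] with s hs
    rw [intervalIntegral.integral_of_le (le_of_lt hs)]
  have hderiv : deriv (fun s => ∫ t in Set.Ioc (0:ℝ) s, g t) r = g r :=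
    heq.deriv_eq.trans hder.deriv
  -- the constant
  set c : ℝ≥0∞ := ENNReal.ofReal (φ r / r) with hcdef
  have hc0 : c ≠ 0 := (ENNReal.ofReal_pos.mpr (div_pos hφr hr0)).ne'
  have hcT : c ≠ ⊤ := ENNReal.ofReal_ne_top
  -- the sublevel set
  set S : Set (EuclideanSpace ℝ (Fin n)) := {y | f y ≤ (α : EReal)} with hSdef
  have hEBx := hEB x h1 h2
  have hSne : S.Nonempty := by
    rcases Set.eq_empty_or_nonempty S with hS | hS
    · rw [hS] at hEBx
      change Metric.infEDist x ∅ ≤ _ at hEBx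
      rw [Metric.infEDist_empty, top_le_iff] at hEBx
      exact absurd hEBx ENNReal.ofReal_ne_top
    · exact hS
  -- key bound for subgradients
  have key : ∀ u ∈ {u : EuclideanSpace ℝ (Fin n) |
      ∀ y, f x + ((⟪u, y - x⟫ : ℝ) : EReal) ≤ f y}, c⁻¹ ≤ (‖u‖₊ : ℝ≥0∞) := by
    intro u hu
    have hyineq : ∀ y ∈ S, r ≤ ‖u‖ * dist x y := by
      intro y hy
      have h3 : f x + ((⟪u, y - x⟫ : ℝ) : EReal) ≤ (α : EReal) := (hu y).trans hy
      rw [hfx, ← EReal.coe_add] at h3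
      have h4 : F + ⟪u, y - x⟫ ≤ α := by exact_mod_cast h3
      have h5 : r ≤ ⟪u, x - y⟫ := by
        have : ⟪u, x - y⟫ = -⟪u, y - x⟫ := by
          rw [← inner_neg_right, neg_sub]
        rw [this]; linarith
      calc r ≤ ⟪u, x - y⟫ := h5
        _ ≤ ‖u‖ * ‖x - y‖ := real_inner_le_norm u (x - y)
        _ = ‖u‖ * dist x y := by rw [dist_eq_norm]
    have hu0 : u ≠ 0 := by
      intro hu0
      obtain ⟨y₀, hy₀⟩ := hSne
      have := hyineq y₀ hy₀
      rw [hu0, norm_zero, zero_mul] at this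
      exact absurd this (not_le.mpr hr0)
    have hunorm : 0 < ‖u‖ := norm_pos_iff.mpr hu0
    -- r / ‖u‖ ≤ infEdist → ≤ φ r
    have hle : ENNReal.ofReal (r / ‖u‖) ≤ EMetric.infEdist x S := by
      show _ ≤ Metric.infEDist x S
      rw [Metric.le_infEDist]
      intro y hy
      rw [edist_dist]
      apply ENNReal.ofReal_le_ofReal
      rw [div_le_iff₀ hunorm]
      calc r ≤ ‖u‖ * dist x y := hyineq y hy
        _ = dist x y * ‖u‖ := mul_comm _ _
    have hle2 : r / ‖u‖ ≤ φ r := by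
      have := hle.trans hEBx
      have h6 : (ENNReal.ofReal (r / ‖u‖)).toReal ≤ φ r :=
        ENNReal.toReal_le_of_le_ofReal hφr.le this
      rwa [ENNReal.toReal_ofReal (div_nonneg hr0.le hunorm.le)] at h6
    have hru : r / φ r ≤ ‖u‖ := by
      rw [div_le_iff₀ hφr]
      rw [div_le_iff₀ hunorm] at hle2
      linarith [hle2]
    have hcinv : c⁻¹ = ENNReal.ofReal (r / φ r) := by
      rw [hcdef, ← ENNReal.ofReal_inv_of_pos (div_pos hφr hr0), inv_div]
    rw [hcinv, ← ENNReal.ofReal_coe_nnreal, coe_nnnorm]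
    exact ENNReal.ofReal_le_ofReal hru
  have hiInf : c⁻¹ ≤ ⨅ u ∈ {u : EuclideanSpace ℝ (Fin n) |
      ∀ y, f x + ((⟪u, y - x⟫ : ℝ) : EReal) ≤ f y}, (‖u‖₊ : ℝ≥0∞) :=
    le_iInf₂ key
  have hgoalc : ENNReal.ofReal
      (deriv (fun s => ∫ t in Set.Ioc (0:ℝ) s, φ t / t) ((f x).toReal - α)) = c := by
    rw [hcdef]
    exact congrArg ENNReal.ofReal hderiv
  rw [hgoalc]
  calc (1 : ℝ≥0∞) = c * c⁻¹ := (ENNReal.mul_inv_cancel hc0 hcT).symm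
    _ ≤ _ := mul_le_mul_right hiInf c
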